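/- Assume (φ1)–(φ3), let V(t) = Φ(|t² − α²|), and let q be a heteroclinic solution of problem (P). If l − 1 > 1, then α·tanh(αt/(m−1)) ≤ q(t) ≤ α·tanh(αt) for all t ≥ 0. -/

import Mathlib

open Real Filter Set MeasureTheory

noncomputable def Phi (φ : ℝ → ℝ) (t : ℝ) : ℝ := ∫ s in (0:ℝ)..|t|, s * φ s

def IsClassicalSolution (φ V q : ℝ → ℝ) : Prop :=
  Differentiable ℝ q ∧
  ∀ t : ℝ, HasDerivAt
    (fun s => if deriv q s = 0 then 0 else φ |deriv q s| * deriv q s)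
    (deriv V (q t)) t

def IsHeteroclinic (φ V : ℝ → ℝ) (α : ℝ) (q : ℝ → ℝ) : Prop :=
  IsClassicalSolution φ V q ∧ Differentiable ℝ (deriv q) ∧ Continuous (deriv q) ∧
  q 0 = 0 ∧ Tendsto q atTop (nhds α) ∧ Tendsto q atBot (nhds (-α))

noncomputable def psi (φ : ℝ → ℝ) (x : ℝ) : ℝ := if x = 0 then 0 else φ |x| * x

lemma tanh_hasDerivAt (x : ℝ) : HasDerivAt Real.tanh (1 - Real.tanh x ^ 2) x := by
  have h : HasDerivAt (fun y => Real.sinh y / Real.cosh y)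
      ((Real.cosh x * Real.cosh x - Real.sinh x * Real.sinh x) / Real.cosh x ^ 2) x :=
    (Real.hasDerivAt_sinh x).div (Real.hasDerivAt_cosh x) (Real.cosh_pos x).ne'
  have he : (fun y => Real.sinh y / Real.cosh y) = Real.tanh := by
    funext y; rw [Real.tanh_eq_sinh_div_cosh]
  rw [he] at h
  convert h using 1
  have hc := Real.cosh_sq x
  rw [Real.tanh_eq_sinh_div_cosh]
  field_simp


lemma tanh_lt_one (x : ℝ) : Real.tanh x < 1 := by
  rw [Real.tanh_eq_sinh_div_cosh, div_lt_one (Real.cosh_pos x)]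
  exact Real.sinh_lt_cosh x

lemma neg_one_lt_tanh (x : ℝ) : -1 < Real.tanh x := by
  rw [Real.tanh_eq_sinh_div_cosh, lt_div_iff₀ (Real.cosh_pos x)]
  have := Real.sinh_lt_cosh (-x)
  simp only [Real.sinh_neg, Real.cosh_neg] at this
  linarith

lemma rpow_tendsto {p : ℝ} (hp : 0 < p) :
    Tendsto (fun t : ℝ => t ^ p) (nhdsWithin 0 (Ioi 0)) (nhds 0) := by
  have : ContinuousAt (fun t : ℝ => t ^ p) 0 :=
    Real.continuousAt_rpow_const 0 p (Or.inr hp.le)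
  have h : Tendsto (fun t : ℝ => t ^ p) (nhdsWithin 0 (Ioi 0)) (nhds ((0:ℝ) ^ p)) :=
    this.continuousWithinAt
  rwa [Real.zero_rpow hp.ne'] at h

lemma cwa_Ici {f : ℝ → ℝ} (h0 : f 0 = 0)
    (h : Tendsto f (nhdsWithin 0 (Ioi 0)) (nhds 0)) :
    ContinuousWithinAt f (Ici 0) 0 := by
  rw [← Set.Ioi_insert]
  rw [continuousWithinAt_insert_self]
  unfold ContinuousWithinAt
  rwa [h0]

section PhiLemmas
variable {φ : ℝ → ℝ} {l m c1 c2 d0 r : ℝ}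

-- squeeze of φ t * t to 0 from the right
lemma G_tendsto (hpos : ∀ t > 0, 0 < φ t) (hc2 : 0 < c2) (hd0 : 0 < d0) (hr : 1 < r)
    (h3 : ∀ t : ℝ, 0 < t → t ≤ d0 → c1 * t ^ (r-1) ≤ φ t * t ∧ φ t * t ≤ c2 * t ^ (r-1)) :
    Tendsto (fun t => φ t * t) (nhdsWithin 0 (Ioi 0)) (nhds 0) := by
  apply squeeze_zero' (g := fun t => c2 * t ^ (r-1))
  · filter_upwards [self_mem_nhdsWithin] with t ht
    exact (mul_pos (hpos t ht) ht).le
  · filter_upwards [self_mem_nhdsWithin, Icc_mem_nhdsGT_of_mem (by constructor <;> [rfl; exact hd0] : (0:ℝ) ∈ Ico 0 d0)] with t ht ht2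
    exact (h3 t ht ht2.2).2
  · have := (rpow_tendsto (p := r - 1) (by linarith)).const_mul c2
    simpa using this

lemma integrand_integrable (hcont : ContinuousOn φ (Ioi 0))
    (hpos : ∀ t > 0, 0 < φ t) (hc2 : 0 < c2) (hd0 : 0 < d0) (hr : 1 < r)
    (h3 : ∀ t : ℝ, 0 < t → t ≤ d0 → c1 * t ^ (r-1) ≤ φ t * t ∧ φ t * t ≤ c2 * t ^ (r-1))
    (x : ℝ) (hx : 0 ≤ x) :
    IntervalIntegrable (fun s => s * φ s) volume 0 x := by
  -- the "nice" extension
  set e : ℝ → ℝ := fun s => if s ≤ 0 then 0 else φ s * s with he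
  have hecont : ContinuousOn e (Icc 0 x) := by
    intro s hs
    rcases eq_or_lt_of_le hs.1 with h0 | h0
    · -- s = 0
      subst h0
      apply (cwa_Ici (by simp [he]) ?_).mono (by intro y hy; exact hy.1)
      apply (G_tendsto hpos hc2 hd0 hr h3).congr'
      filter_upwards [self_mem_nhdsWithin] with t ht
      simp [he, not_le.2 (show (0:ℝ) < t from ht)]
    · -- s > 0
      have : ∀ y ∈ Ioi (0:ℝ), e y = φ y * y := by
        intro y hy; simp [he, not_le.2 (mem_Ioi.1 hy)]
      apply ContinuousWithinAt.mono _ (Icc_subset_Ici_self)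
      have h1 : ContinuousWithinAt (fun y => φ y * y) (Ioi 0) s :=
        ((hcont s h0).mul continuousWithinAt_id)
      have h2 : ContinuousWithinAt e (Ioi 0) s := h1.congr this (this s h0)
      have := h2.continuousAt (Ioi_mem_nhds h0)
      exact this.continuousWithinAt
  have heint : IntervalIntegrable e volume 0 x := by
    apply ContinuousOn.intervalIntegrable
    rwa [uIcc_of_le hx]
  apply heint.congr
  rw [uIoc_of_le hx]
  intro s hs
  simp [he, not_le.2 hs.1, mul_comm]


lemma Phi_abs (t : ℝ) : Phi φ |t| = Phi φ t := by simp [Phi]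

lemma Phi_neg (t : ℝ) : Phi φ (-t) = Phi φ t := by simp [Phi]

lemma Phi_zero : Phi φ 0 = 0 := by simp [Phi]

lemma Phi_nonneg (hpos : ∀ t > 0, 0 < φ t) (x : ℝ) : 0 ≤ Phi φ x := by
  apply intervalIntegral.integral_nonneg (abs_nonneg x)
  intro s hs
  rcases eq_or_lt_of_le hs.1 with h | h
  · simp [← h]
  · exact (mul_pos h (hpos s h)).le

lemma Phi_pos (hcont : ContinuousOn φ (Ioi 0))
    (hpos : ∀ t > 0, 0 < φ t) (hc2 : 0 < c2) (hd0 : 0 < d0) (hr : 1 < r)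
    (h3 : ∀ t : ℝ, 0 < t → t ≤ d0 → c1 * t ^ (r-1) ≤ φ t * t ∧ φ t * t ≤ c2 * t ^ (r-1))
    {x : ℝ} (hx : x ≠ 0) : 0 < Phi φ x := by
  have hax : 0 < |x| := abs_pos.2 hx
  apply intervalIntegral.intervalIntegral_pos_of_pos_on
    (integrand_integrable hcont hpos hc2 hd0 hr h3 _ hax.le)
  · intro s hs
    exact mul_pos hs.1 (hpos s hs.1)
  · exact hax

-- derivative of Phi
lemma Phi_hasDerivAt (hcont : ContinuousOn φ (Ioi 0))
    (hpos : ∀ t > 0, 0 < φ t) (hc2 : 0 < c2) (hd0 : 0 < d0) (hr : 1 < r)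
    (h3 : ∀ t : ℝ, 0 < t → t ≤ d0 → c1 * t ^ (r-1) ≤ φ t * t ∧ φ t * t ≤ c2 * t ^ (r-1))
    (t : ℝ) : HasDerivAt (Phi φ) (psi φ t) t := by
  have hGcont : ContinuousOn (fun s => s * φ s) (Ioi (0:ℝ)) :=
    continuousOn_id.mul hcont
  have key : ∀ u : ℝ, 0 < u → HasDerivAt (fun x => ∫ s in (0:ℝ)..x, s * φ s) (u * φ u) u := by
    intro u hu
    apply intervalIntegral.integral_hasDerivAt_right
      (integrand_integrable hcont hpos hc2 hd0 hr h3 u hu.le)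
      (ContinuousOn.stronglyMeasurableAtFilter isOpen_Ioi hGcont u hu)
      ((hGcont u hu).continuousAt (Ioi_mem_nhds hu))
  rcases lt_trichotomy t 0 with ht | ht | ht
  · -- t < 0
    have h1 : HasDerivAt (fun x : ℝ => ∫ s in (0:ℝ)..(-x), s * φ s) ((-t) * φ (-t) * (-1)) t := by
      exact (key (-t) (by linarith)).comp t (hasDerivAt_neg t)
    have h2 : (fun x : ℝ => ∫ s in (0:ℝ)..(-x), s * φ s) =ᶠ[nhds t] Phi φ := by
      filter_upwards [Iio_mem_nhds ht] with x hx
      rw [Phi, abs_of_neg hx]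
    have h3' := h1.congr_of_eventuallyEq h2.symm
    refine h3'.congr_deriv ?_
    rw [psi, if_neg ht.ne, abs_of_neg ht]; ring
  · -- t = 0
    subst ht
    rw [psi, if_pos rfl]
    rw [hasDerivAt_iff_tendsto_slope]
    apply squeeze_zero_norm' (a := fun x => (c2/r) * |x| ^ (r-1))
    · filter_upwards [diff_mem_nhdsWithin_compl
        (Ioo_mem_nhds (by linarith : -d0 < 0) hd0) {0}] with x hx
      obtain ⟨hx1, hx2⟩ := hx
      have hxne : x ≠ 0 := by simpa using hx2
      have hax : 0 < |x| := abs_pos.2 hxne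
      have haxd : |x| ≤ d0 := by
        rw [abs_le]; constructor <;> [exact hx1.1.le; exact hx1.2.le]
      have hb : Phi φ x ≤ c2 * |x| ^ r / r := by
        have hint1 := integrand_integrable hcont hpos hc2 hd0 hr h3 |x| hax.le
        have hint2 : IntervalIntegrable (fun s : ℝ => c2 * s ^ (r-1)) volume 0 |x| := by
          apply ContinuousOn.intervalIntegrable
          apply ContinuousOn.mul continuousOn_const
          intro s hs
          rw [uIcc_of_le hax.le] at hs
          apply (Real.continuousAt_rpow_const s (r-1) (Or.inr (by linarith))).continuousWithinAt
        have hmono : ∀ s ∈ Icc (0:ℝ) |x|, s * φ s ≤ c2 * s ^ (r-1) := by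
          intro s hs
          rcases eq_or_lt_of_le hs.1 with h | h
          · rw [← h, Real.zero_rpow (by linarith : r - 1 ≠ 0)]; simp
          · rw [mul_comm]
            exact (h3 s h (le_trans hs.2 haxd)).2
        have := intervalIntegral.integral_mono_on hax.le hint1 hint2 hmono
        rw [Phi]
        refine le_trans this ?_
        rw [intervalIntegral.integral_const_mul,
          integral_rpow (Or.inl (by linarith : (-1:ℝ) < r - 1))]
        rw [Real.zero_rpow (by linarith : r - 1 + 1 ≠ 0), sub_add_cancel]
        rw [sub_zero, mul_div_assoc]
      have hnn := Phi_nonneg hpos (φ := φ) x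
      rw [slope_def_field, Phi_zero, sub_zero, sub_zero, div_eq_mul_inv, Real.norm_eq_abs, abs_mul,
        abs_of_nonneg hnn, abs_inv]
      calc Phi φ x * |x|⁻¹ ≤ (c2 * |x| ^ r / r) * |x|⁻¹ := by
            apply mul_le_mul_of_nonneg_right hb (by positivity)
        _ = (c2/r) * |x| ^ (r-1) := by
            rw [show r = (r-1) + 1 by ring, Real.rpow_add_one hax.ne']
            field_simp; ring
    · have := (rpow_tendsto (p := r - 1) (by linarith)).const_mul (c2/r)
      simp only [mul_zero] at this
      apply this.comp
      apply tendsto_nhdsWithin_of_tendsto_nhds_of_eventually_within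
      · exact (continuous_abs.tendsto' 0 0 abs_zero).mono_left nhdsWithin_le_nhds
      · filter_upwards [self_mem_nhdsWithin] with x hx
        exact abs_pos.2 hx
  · -- t > 0
    have h2 : (fun x : ℝ => ∫ s in (0:ℝ)..x, s * φ s) =ᶠ[nhds t] Phi φ := by
      filter_upwards [Ioi_mem_nhds ht] with x hx
      rw [Phi, abs_of_pos hx]
    have h3' := (key t ht).congr_of_eventuallyEq h2.symm
    refine h3'.congr_deriv ?_
    rw [psi, if_neg ht.ne', abs_of_pos ht]; ring


lemma Phi_strictMonoOn (hcont : ContinuousOn φ (Ioi 0))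
    (hpos : ∀ t > 0, 0 < φ t) (hc2 : 0 < c2) (hd0 : 0 < d0) (hr : 1 < r)
    (h3 : ∀ t : ℝ, 0 < t → t ≤ d0 → c1 * t ^ (r-1) ≤ φ t * t ∧ φ t * t ≤ c2 * t ^ (r-1)) :
    StrictMonoOn (Phi φ) (Ici 0) := by
  apply strictMonoOn_of_deriv_pos (convex_Ici 0)
  · exact fun x _ =>
      (Phi_hasDerivAt hcont hpos hc2 hd0 hr h3 x).differentiableAt.continuousAt.continuousWithinAt
  · intro x hx
    rw [interior_Ici] at hx
    rw [(Phi_hasDerivAt hcont hpos hc2 hd0 hr h3 x).deriv]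
    rw [psi, if_neg (ne_of_gt hx), abs_of_pos hx]
    exact mul_pos (hpos x hx) hx

lemma G_strictMonoOn (hcont : ContinuousOn φ (Ioi 0))
    (hd1 : ∀ t > 0, 0 < deriv (fun s => φ s * s) t) :
    StrictMonoOn (fun s => φ s * s) (Ioi (0:ℝ)) := by
  apply strictMonoOn_of_deriv_pos (convex_Ioi 0) (hcont.mul continuousOn_id)
  rwa [interior_Ioi]

lemma psi_monotone (hcont : ContinuousOn φ (Ioi 0)) (hpos : ∀ t > 0, 0 < φ t)
    (hd1 : ∀ t > 0, 0 < deriv (fun s => φ s * s) t) :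
    Monotone (psi φ) := by
  have hGm := G_strictMonoOn hcont hd1
  have hneg : ∀ x : ℝ, x < 0 → psi φ x < 0 := by
    intro x hx
    rw [psi, if_neg hx.ne, abs_of_neg hx]
    exact mul_neg_of_pos_of_neg (hpos _ (by linarith)) hx
  have hposv : ∀ x : ℝ, 0 < x → 0 < psi φ x := by
    intro x hx
    rw [psi, if_neg hx.ne', abs_of_pos hx]
    exact mul_pos (hpos _ hx) hx
  intro x y hxy
  rcases eq_or_lt_of_le hxy with h | h
  · subst h; rfl
  rcases lt_trichotomy x 0 with hx | hx | hx
  · rcases lt_trichotomy y 0 with hy | hy | hy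
    · rw [psi, if_neg hx.ne, psi, if_neg hy.ne, abs_of_neg hx, abs_of_neg hy]
      have := hGm (mem_Ioi.2 (by linarith : (0:ℝ) < -y)) (mem_Ioi.2 (by linarith : (0:ℝ) < -x))
        (by linarith)
      simp only at this
      nlinarith
    · subst hy; exact le_of_lt (by simpa [psi] using hneg x hx)
    · exact le_of_lt (lt_trans (hneg x hx) (hposv y hy))
  · subst hx
    rcases eq_or_lt_of_le (le_of_lt h) with hy | hy
    · subst hy; rfl
    · simp only [psi, if_pos rfl]
      exact le_of_lt (hposv y hy)
  · have hy : 0 < y := lt_trans hx h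
    rw [psi, if_neg hx.ne', psi, if_neg hy.ne', abs_of_pos hx, abs_of_pos hy]
    exact le_of_lt (hGm (mem_Ioi.2 hx) (mem_Ioi.2 hy) h)

lemma Phi_convexOn (hcont : ContinuousOn φ (Ioi 0))
    (hpos : ∀ t > 0, 0 < φ t) (hc2 : 0 < c2) (hd0 : 0 < d0) (hr : 1 < r)
    (h3 : ∀ t : ℝ, 0 < t → t ≤ d0 → c1 * t ^ (r-1) ≤ φ t * t ∧ φ t * t ≤ c2 * t ^ (r-1))
    (hd1 : ∀ t > 0, 0 < deriv (fun s => φ s * s) t) :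
    ConvexOn ℝ univ (Phi φ) := by
  have hD := Phi_hasDerivAt hcont hpos hc2 hd0 hr h3
  have hde : deriv (Phi φ) = psi φ := funext fun x => (hD x).deriv
  apply MonotoneOn.convexOn_of_deriv convex_univ
  · exact fun x _ => (hD x).differentiableAt.continuousAt.continuousWithinAt
  · exact fun x _ => (hD x).differentiableAt.differentiableWithinAt
  · rw [hde]
    exact (psi_monotone hcont hpos hd1).monotoneOn _

lemma Phi_scale (hcont : ContinuousOn φ (Ioi 0))
    (hpos : ∀ t > 0, 0 < φ t) (hc2 : 0 < c2) (hd0 : 0 < d0) (hr : 1 < r)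
    (h3 : ∀ t : ℝ, 0 < t → t ≤ d0 → c1 * t ^ (r-1) ≤ φ t * t ∧ φ t * t ≤ c2 * t ^ (r-1))
    (hd1 : ∀ t > 0, 0 < deriv (fun s => φ s * s) t)
    {lam : ℝ} (h0 : 0 ≤ lam) (h1 : lam ≤ 1) (u : ℝ) :
    Phi φ (lam * u) ≤ lam * Phi φ u := by
  have hc := Phi_convexOn hcont hpos hc2 hd0 hr h3 hd1
  have := hc.2 (mem_univ u) (mem_univ (0:ℝ)) h0 (by linarith : (0:ℝ) ≤ 1 - lam) (by ring)
  simpa [Phi_zero] using this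

lemma lm_ineq (hcont : ContinuousOn φ (Ioi 0)) (hdiff : DifferentiableOn ℝ φ (Ioi 0))
    (hpos : ∀ t > 0, 0 < φ t) (hc2 : 0 < c2) (hd0 : 0 < d0) (hr : 1 < r)
    (h3 : ∀ t : ℝ, 0 < t → t ≤ d0 → c1 * t ^ (r-1) ≤ φ t * t ∧ φ t * t ≤ c2 * t ^ (r-1))
    (h2 : ∀ t > 0, l - 1 ≤ deriv (fun s => φ s * s) t / φ t ∧
      deriv (fun s => φ s * s) t / φ t ≤ m - 1)
    (x : ℝ) : l * Phi φ x ≤ psi φ x * x ∧ psi φ x * x ≤ m * Phi φ x := by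
  -- reduce to x ≥ 0
  have key : ∀ y : ℝ, 0 ≤ y → l * Phi φ y ≤ psi φ y * y ∧ psi φ y * y ≤ m * Phi φ y := by
    intro y hy
    rcases eq_or_lt_of_le hy with h0 | h0
    · simp [← h0, psi, Phi_zero]
    -- continuity of t ↦ φ t * t^2 on Ici 0
    have hA : ContinuousOn (fun t => φ t * t^2) (Ici (0:ℝ)) := by
      intro s hs
      rcases eq_or_lt_of_le (mem_Ici.1 hs) with h | h
      · rw [← h]
        apply cwa_Ici (by simp)
        have h1 : Tendsto (fun t : ℝ => (φ t * t) * t) (nhdsWithin 0 (Ioi 0)) (nhds (0 * 0)) :=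
          (G_tendsto hpos hc2 hd0 hr h3).mul
            ((continuous_id.tendsto' 0 0 rfl).mono_left nhdsWithin_le_nhds)
        simp only [mul_zero] at h1
        apply h1.congr
        intro t; ring
      · have : ContinuousAt (fun t => φ t * t^2) s := by
          exact ((hcont s h).continuousAt (Ioi_mem_nhds h)).mul (continuous_pow 2).continuousAt
        exact this.continuousWithinAt
    have hPhiD := Phi_hasDerivAt hcont hpos hc2 hd0 hr h3
    have hPhiCont : ContinuousOn (Phi φ) (Ici (0:ℝ)) :=
      fun s _ => (hPhiD s).differentiableAt.continuousAt.continuousWithinAt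
    -- derivative facts for t > 0
    have hDer : ∀ t : ℝ, 0 < t → HasDerivAt (fun s => φ s * s^2)
        (deriv (fun s => φ s * s) t * t + (φ t * t)) t := by
      intro t ht
      have hGd : DifferentiableAt ℝ (fun s => φ s * s) t := by
        have := (hdiff t ht).differentiableAt (Ioi_mem_nhds ht)
        exact this.mul differentiableAt_id
      have hGD : HasDerivAt (fun s => φ s * s) (deriv (fun s => φ s * s) t) t := hGd.hasDerivAt
      have hA2 := hGD.mul (hasDerivAt_id t)
      simp only [id_eq, mul_one] at hA2
      have heq : (fun s => φ s * s * s) = (fun s => φ s * s^2) := by funext s; ring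
      rw [← heq]
      exact hA2
    have hGlb : ∀ t : ℝ, 0 < t → (l-1) * φ t ≤ deriv (fun s => φ s * s) t ∧
        deriv (fun s => φ s * s) t ≤ (m-1) * φ t := by
      intro t ht
      have hp := hpos t ht
      obtain ⟨ha, hb⟩ := h2 t ht
      rw [le_div_iff₀ hp] at ha
      rw [div_le_iff₀ hp] at hb
      exact ⟨ha, hb⟩
    constructor
    · -- l * Phi ≤ φ x x²
      have hmono : MonotoneOn (fun t => φ t * t^2 - l * Phi φ t) (Ici (0:ℝ)) := by
        apply monotoneOn_of_deriv_nonneg (convex_Ici 0)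
          (hA.sub (continuousOn_const.mul hPhiCont))
        · intro t ht
          rw [interior_Ici] at ht
          exact ((hDer t ht).sub ((hPhiD t).const_mul l)).differentiableAt.differentiableWithinAt
        · intro t ht
          rw [interior_Ici] at ht
          erw [((hDer t ht).sub ((hPhiD t).const_mul l)).deriv]
          rw [psi, if_neg (ne_of_gt (mem_Ioi.1 ht)), abs_of_pos (mem_Ioi.1 ht)]
          have h5 := (hGlb t ht).1
          nlinarith [mul_le_mul_of_nonneg_right h5 (le_of_lt (mem_Ioi.1 ht))]
      have := hmono (self_mem_Ici) (mem_Ici.2 h0.le) h0.le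
      simp only [Phi_zero] at this
      rw [psi, if_neg h0.ne', abs_of_pos h0]
      nlinarith
    · have hmono : MonotoneOn (fun t => m * Phi φ t - φ t * t^2) (Ici (0:ℝ)) := by
        apply monotoneOn_of_deriv_nonneg (convex_Ici 0)
          ((continuousOn_const.mul hPhiCont).sub hA)
        · intro t ht
          rw [interior_Ici] at ht
          exact (((hPhiD t).const_mul m).sub (hDer t ht)).differentiableAt.differentiableWithinAt
        · intro t ht
          rw [interior_Ici] at ht
          erw [(((hPhiD t).const_mul m).sub (hDer t ht)).deriv]
          rw [psi, if_neg (ne_of_gt (mem_Ioi.1 ht)), abs_of_pos (mem_Ioi.1 ht)]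
          have h5 := (hGlb t ht).2
          nlinarith [mul_le_mul_of_nonneg_right h5 (le_of_lt (mem_Ioi.1 ht))]
      have := hmono (self_mem_Ici) (mem_Ici.2 h0.le) h0.le
      simp only [Phi_zero] at this
      rw [psi, if_neg h0.ne', abs_of_pos h0]
      nlinarith
  rcases le_or_gt 0 x with hx | hx
  · exact key x hx
  · have hx' : 0 ≤ -x := by linarith
    have h := key (-x) hx'
    have e1 : psi φ (-x) * (-x) = psi φ x * x := by
      rw [psi, psi, if_neg (by linarith : -x ≠ 0), if_neg hx.ne, abs_neg]
      ring
    rw [e1, Phi_neg] at h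
    exact h

end PhiLemmas


lemma gron_fwd {f f' : ℝ → ℝ} {a b K : ℝ} (hab : a ≤ b)
    (hf : ∀ s ∈ Icc a b, HasDerivAt f (f' s) s)
    (hbd : ∀ s ∈ Icc a b, |f' s| ≤ K * |f s|) (h0 : f a = 0) : f b = 0 := by
  have hcont : ContinuousOn f (Icc a b) := fun s hs => (hf s hs).continuousAt.continuousWithinAt
  have key := norm_le_gronwallBound_of_norm_deriv_right_le (δ := 0) (ε := 0) (K := K) hcont
    (fun x hx => (hf x (Ico_subset_Icc_self hx)).hasDerivWithinAt)
    (by rw [h0]; simp)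
    (fun x hx => by
      simpa [Real.norm_eq_abs] using hbd x (Ico_subset_Icc_self hx))
  have hb := key b (right_mem_Icc.2 hab)
  rw [gronwallBound_ε0_δ0] at hb
  exact norm_le_zero_iff.1 hb

lemma gron_bwd {f f' : ℝ → ℝ} {a b K : ℝ} (hab : a ≤ b)
    (hf : ∀ s ∈ Icc a b, HasDerivAt f (f' s) s)
    (hbd : ∀ s ∈ Icc a b, |f' s| ≤ K * |f s|) (h0 : f b = 0) : f a = 0 := by
  have hmem : ∀ s ∈ Icc a b, a + b - s ∈ Icc a b := by
    intro s hs
    exact ⟨by linarith [hs.2], by linarith [hs.1]⟩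
  have hg : ∀ s ∈ Icc a b, HasDerivAt (fun u => f (a + b - u)) (-(f' (a + b - s))) s := by
    intro s hs
    have h1 : HasDerivAt (fun u : ℝ => a + b - u) (-1) s := by
      simpa using (hasDerivAt_id s).const_sub (a + b)
    have := (hf (a + b - s) (hmem s hs)).comp s h1
    simpa [Function.comp_def] using this
  have hgb : ∀ s ∈ Icc a b, |(-(f' (a + b - s)))| ≤ K * |f (a + b - s)| := by
    intro s hs
    rw [abs_neg]
    exact hbd _ (hmem s hs)
  have := gron_fwd hab hg hgb (by simpa using h0)
  simpa using this

lemma nonpos_of_deriv_le {f f' c : ℝ → ℝ} (hc : Continuous c)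
    (hf : ∀ t, HasDerivAt f (f' t) t)
    (hbd : ∀ t, f' t ≤ -(c t * f t)) (h0 : f 0 = 0) : ∀ t, 0 ≤ t → f t ≤ 0 := by
  set C := fun t => ∫ s in (0:ℝ)..t, c s with hCdef
  have hC : ∀ t, HasDerivAt C (c t) t := fun t =>
    intervalIntegral.integral_hasDerivAt_right (hc.intervalIntegrable 0 t)
      (hc.stronglyMeasurableAtFilter volume (nhds t)) hc.continuousAt
  set F := fun t => f t * Real.exp (C t) with hFdef
  have hF : ∀ t, HasDerivAt F (f' t * Real.exp (C t) + f t * (Real.exp (C t) * c t)) t :=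
    fun t => (hf t).mul ((hC t).exp)
  have hmono : AntitoneOn F (Ici 0) := by
    apply antitoneOn_of_deriv_nonpos (convex_Ici 0)
      (fun t _ => (hF t).differentiableAt.continuousAt.continuousWithinAt)
      (fun t _ => (hF t).differentiableAt.differentiableWithinAt)
    intro t _
    rw [(hF t).deriv]
    have h1 := hbd t
    have h2 : (0:ℝ) < Real.exp (C t) := Real.exp_pos _
    nlinarith [mul_le_mul_of_nonneg_right h1 h2.le]
  intro t ht
  have hle := hmono self_mem_Ici (mem_Ici.2 ht) ht
  have hF0 : F 0 = 0 := by simp [hFdef, h0]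
  rw [hF0] at hle
  have hle' : f t * Real.exp (C t) ≤ 0 := hle
  nlinarith [Real.exp_pos (C t)]


section Psb
variable {φ : ℝ → ℝ} {c1 c2 d0 r : ℝ}

lemma psi_mul_self_bound (hpos : ∀ t > 0, 0 < φ t) (hr : 1 < r)
    (h3 : ∀ t : ℝ, 0 < t → t ≤ d0 → c1 * t ^ (r-1) ≤ φ t * t ∧ φ t * t ≤ c2 * t ^ (r-1))
    (x : ℝ) : 0 ≤ psi φ x * x ∧ (|x| ≤ d0 → psi φ x * x ≤ c2 * |x| ^ r) := by
  rcases eq_or_ne x 0 with h | h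
  · subst h
    simp [psi, Real.zero_rpow (by linarith : r ≠ 0)]
  · have hax : 0 < |x| := abs_pos.2 h
    have he : psi φ x * x = (φ |x| * |x|) * |x| := by
      rw [psi, if_neg h]
      rcases abs_choice x with h1 | h1 <;> rw [h1] <;> ring
    constructor
    · rw [he]
      have := hpos |x| hax
      positivity
    · intro hxd
      rw [he]
      have hb := (h3 |x| hax hxd).2
      calc (φ |x| * |x|) * |x| ≤ (c2 * |x| ^ (r-1)) * |x| :=
            mul_le_mul_of_nonneg_right hb (abs_nonneg x)
        _ = c2 * |x| ^ r := by
            rw [mul_assoc, ← Real.rpow_add_one hax.ne' (r-1), sub_add_cancel]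

end Psb

set_option maxHeartbeats 1000000 in
theorem statement5 (φ : ℝ → ℝ) (l m α : ℝ) (q : ℝ → ℝ)
    (hφC1 : ContDiffOn ℝ 1 φ (Set.Ioi 0))
    (hφpos : ∀ t > 0, 0 < φ t)
    (hφ1 : ∀ t > 0, 0 < deriv (fun s => φ s * s) t)
    (hl : 1 < l) (hlm : l ≤ m)
    (hφ2 : ∀ t > 0, l - 1 ≤ deriv (fun s => φ s * s) t / φ t ∧
      deriv (fun s => φ s * s) t / φ t ≤ m - 1)
    (hφ3 : ∃ c₁ c₂ δ₀ r : ℝ, 0 < c₁ ∧ 0 < c₂ ∧ 0 < δ₀ ∧ 1 < r ∧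
      ∀ t : ℝ, 0 < t → t ≤ δ₀ → c₁ * t ^ (r - 1) ≤ φ t * t ∧ φ t * t ≤ c₂ * t ^ (r - 1))
    (hα : 0 < α)
    (hq : IsHeteroclinic φ (fun t => Phi φ |t ^ 2 - α ^ 2|) α q)
    (hcase : 1 < l - 1) :
    ∀ t : ℝ, 0 ≤ t →
      α * Real.tanh (α * t / (m - 1)) ≤ q t ∧ q t ≤ α * Real.tanh (α * t) := by
  obtain ⟨c1, c2, d0, r, hc1, hc2, hd0, hr, h3⟩ := hφ3
  obtain ⟨⟨hqdiff, hsol⟩, hq'diff, hq'cont, hq0, hqtop, hqbot⟩ := hq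
  have hcont : ContinuousOn φ (Ioi 0) := hφC1.continuousOn
  have hdiff : DifferentiableOn ℝ φ (Ioi 0) := hφC1.differentiableOn (by norm_num)
  have hm1 : 1 < m - 1 := by linarith
  have hm0 : (0:ℝ) < m - 1 := by linarith
  have hPhiD : ∀ t, HasDerivAt (Phi φ) (psi φ t) t :=
    Phi_hasDerivAt hcont hφpos hc2 hd0 hr h3
  have hPhidiff : Differentiable ℝ (Phi φ) := fun x => (hPhiD x).differentiableAt
  have hPhiC : Continuous (Phi φ) := hPhidiff.continuous
  have hPhiSM := Phi_strictMonoOn hcont hφpos hc2 hd0 hr h3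
  have hPhinn := Phi_nonneg (φ := φ) hφpos
  set W : ℝ → ℝ := fun x => Phi φ (x^2 - α^2) with hWdef
  have hVW : (fun t => Phi φ |t ^ 2 - α ^ 2|) = W := funext fun x => Phi_abs _
  have hW : ∀ x, HasDerivAt W (psi φ (x^2 - α^2) * (2*x)) x := by
    intro x
    have h1 : HasDerivAt (fun y : ℝ => y^2 - α^2) (2*x) x := by
      simpa using (hasDerivAt_pow 2 x).sub_const (α^2)
    exact (hPhiD _).comp x h1
  have hqd : ∀ t, HasDerivAt q (deriv q t) t := fun t => (hqdiff t).hasDerivAt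
  have hq'd : ∀ t, HasDerivAt (deriv q) (deriv (deriv q) t) t := fun t => (hq'diff t).hasDerivAt
  have hF : ∀ t, HasDerivAt (fun s => psi φ (deriv q s))
      (psi φ ((q t)^2 - α^2) * (2 * q t)) t := by
    intro t
    have h1 := hsol t
    have he : (fun s => if deriv q s = 0 then 0 else φ |deriv q s| * deriv q s)
        = fun s => psi φ (deriv q s) := by
      funext s; rw [psi]
    rw [he] at h1
    have hd : deriv (fun t => Phi φ |t ^ 2 - α ^ 2|) (q t) = psi φ ((q t)^2 - α^2) * (2 * q t) := by
      rw [hVW]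
      exact (hW (q t)).deriv
    rwa [hd] at h1
  set E : ℝ → ℝ := fun t => psi φ (deriv q t) * deriv q t - Phi φ (deriv q t) - W (q t)
    with hEdef
  have hE : ∀ t, HasDerivAt E 0 t := by
    intro t
    have t1 := (hF t).mul (hq'd t)
    have t2 : HasDerivAt (fun s => Phi φ (deriv q s))
        (psi φ (deriv q t) * deriv (deriv q) t) t := (hPhiD _).comp t (hq'd t)
    have t3 : HasDerivAt (fun s => W (q s))
        (psi φ ((q t)^2 - α^2) * (2 * q t) * deriv q t) t := (hW (q t)).comp t (hqd t)
    have h4 := (t1.sub t2).sub t3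
    refine h4.congr_deriv ?_
    ring
  have hEconst : ∀ x, E x = E 0 := fun x =>
    is_const_of_deriv_eq_zero (fun t => (hE t).differentiableAt) (fun t => (hE t).deriv) x 0
  -- the mean value sequence
  have hmvt : ∀ n : ℕ, ∃ cc ∈ Ioo ((n:ℝ)) ((n:ℝ)+1),
      deriv q cc = (q ((n:ℝ)+1) - q ((n:ℝ))) / (((n:ℝ)+1) - (n:ℝ)) := by
    intro n
    exact exists_hasDerivAt_eq_slope q (deriv q) (by linarith)
      (hqdiff.continuous.continuousOn) (fun x _ => hqd x)
  choose cs hcs hcs2 using hmvt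
  have hcs2' : ∀ n : ℕ, deriv q (cs n) = q ((n:ℝ)+1) - q ((n:ℝ)) := by
    intro n
    rw [hcs2 n]
    simp
  have T0 : Tendsto (fun n : ℕ => (n:ℝ)) atTop atTop := tendsto_natCast_atTop_atTop
  have Tc : Tendsto cs atTop atTop :=
    tendsto_atTop_mono (fun n => (hcs n).1.le) T0
  have T2 : Tendsto (fun n => q (cs n)) atTop (nhds α) := hqtop.comp Tc
  have T1 : Tendsto (fun n => deriv q (cs n)) atTop (nhds 0) := by
    have e1 : (fun n : ℕ => deriv q (cs n)) = fun n : ℕ => q ((n:ℝ)+1) - q ((n:ℝ)) :=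
      funext hcs2'
    rw [e1]
    have h5 : Tendsto (fun n : ℕ => q ((n:ℝ)+1)) atTop (nhds α) :=
      hqtop.comp (tendsto_atTop_add_const_right atTop 1 T0)
    have h6 : Tendsto (fun n : ℕ => q ((n:ℝ))) atTop (nhds α) := hqtop.comp T0
    simpa using h5.sub h6
  have L1 : Tendsto (fun n => psi φ (deriv q (cs n)) * deriv q (cs n)) atTop (nhds 0) := by
    apply squeeze_zero' (g := fun n => c2 * |deriv q (cs n)| ^ r)
    · filter_upwards with n
      exact (psi_mul_self_bound hφpos hr h3 _).1
    · have habs : Tendsto (fun n => |deriv q (cs n)|) atTop (nhds 0) := by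
        simpa using T1.abs
      filter_upwards [habs.eventually_le_const hd0] with n hn
      exact (psi_mul_self_bound hφpos hr h3 _).2 hn
    · have hca : ContinuousAt (fun y : ℝ => c2 * y ^ r) 0 :=
        (Real.continuousAt_rpow_const 0 r (Or.inr (by linarith))).const_mul c2
      have := hca.tendsto.comp (by simpa using T1.abs)
      simpa [Real.zero_rpow (by linarith : r ≠ 0), Function.comp_def] using this
  have L2 : Tendsto (fun n => Phi φ (deriv q (cs n))) atTop (nhds 0) := by
    have := (hPhiC.tendsto 0).comp T1
    simpa [Phi_zero, Function.comp_def] using this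
  have L3 : Tendsto (fun n => W (q (cs n))) atTop (nhds 0) := by
    have hWC : Continuous W := hPhiC.comp (by continuity)
    have := (hWC.tendsto α).comp T2
    simpa [hWdef, Phi_zero, Function.comp_def] using this
  have TE : Tendsto (fun n => E (cs n)) atTop (nhds 0) := by
    simpa using (L1.sub L2).sub L3
  have hE00 : E 0 = 0 := by
    have e1 : (fun n => E (cs n)) = fun _ => E 0 := funext fun n => hEconst (cs n)
    rw [e1] at TE
    exact tendsto_nhds_unique tendsto_const_nhds TE
  have hE0 : ∀ t, E t = 0 := fun t => (hEconst t).trans hE00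
  have hiden : ∀ t, psi φ (deriv q t) * deriv q t - Phi φ (deriv q t) = W (q t) := by
    intro t
    have h5 : psi φ (deriv q t) * deriv q t - Phi φ (deriv q t) - W (q t) = 0 := hE0 t
    linarith
  have klm := lm_ineq (l := l) (m := m) hcont hdiff hφpos hc2 hd0 hr h3 hφ2
  have k1 : ∀ t, (l-1) * Phi φ (deriv q t) ≤ W (q t) := by
    intro t
    have h5 := (klm (deriv q t)).1
    have h6 := hiden t
    linarith
  have k2 : ∀ t, W (q t) ≤ (m-1) * Phi φ (deriv q t) := by
    intro t
    have h5 := (klm (deriv q t)).2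
    have h6 := hiden t
    linarith
  have h2abs : ∀ t, |deriv q t| ≤ |(q t)^2 - α^2| := by
    intro t
    by_contra hlt
    push_neg at hlt
    have p1 : Phi φ (deriv q t) ≤ W (q t) := by
      have h5 := k1 t
      have h6 := hPhinn (deriv q t)
      nlinarith
    have p2 : Phi φ |(q t)^2 - α^2| < Phi φ |deriv q t| :=
      hPhiSM (mem_Ici.2 (abs_nonneg _)) (mem_Ici.2 (abs_nonneg _)) hlt
    rw [Phi_abs, Phi_abs] at p2
    have : W (q t) = Phi φ ((q t)^2 - α^2) := rfl
    linarith
  have h3ne : ∀ t, (q t)^2 ≠ α^2 := by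
    intro t hteq
    set h : ℝ → ℝ := fun s => (q s)^2 - α^2 with hhdef
    have hht : h t = 0 := by simp [hhdef, hteq]
    have hd : ∀ s, HasDerivAt h (2 * q s * deriv q s) s := by
      intro s
      have := ((hqd s).pow 2).sub_const (α^2)
      simpa [Function.comp_def, hhdef] using this
    obtain ⟨C, hC⟩ := (isCompact_Icc (a := min t 0) (b := max t 0)).exists_bound_of_continuousOn
      (hqdiff.continuous.continuousOn)
    have hbd : ∀ s ∈ Icc (min t 0) (max t 0), |2 * q s * deriv q s| ≤ (2*C) * |h s| := by
      intro s hs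
      have h5 := h2abs s
      have hqb : |q s| ≤ C := by
        have := hC s hs
        rwa [Real.norm_eq_abs] at this
      have h7 : |2 * q s * deriv q s| = 2 * |q s| * |deriv q s| := by
        rw [abs_mul, abs_mul]
        simp [abs_of_nonneg]
      rw [h7]
      have h8 : |deriv q s| ≤ |h s| := h5
      have hqsnn : (0:ℝ) ≤ |q s| := abs_nonneg _
      nlinarith [abs_nonneg (deriv q s), abs_nonneg (h s)]
    have hcontr : h 0 = 0 := by
      rcases le_total t 0 with htle | htle
      · have hmin : min t 0 = t := min_eq_left htle
        have hmax : max t 0 = 0 := max_eq_right htle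
        apply gron_fwd (a := t) (b := 0) htle
          (fun s hs => hd s)
          (fun s hs => by
            apply hbd s
            rw [hmin, hmax]; exact hs) hht
      · have hmin : min t 0 = 0 := min_eq_right htle
        have hmax : max t 0 = t := max_eq_left htle
        apply gron_bwd (a := 0) (b := t) htle
          (fun s hs => hd s)
          (fun s hs => by
            apply hbd s
            rw [hmin, hmax]; exact hs) hht
    rw [hhdef] at hcontr
    simp only [hq0] at hcontr
    nlinarith
  have h4 : ∀ t, (q t)^2 < α^2 := by
    intro t
    rcases lt_or_ge ((q t)^2) (α^2) with h5 | h5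
    · exact h5
    exfalso
    have hgt : α^2 < (q t)^2 := lt_of_le_of_ne h5 (Ne.symm (h3ne t))
    have hsub := intermediate_value_uIcc (a := (0:ℝ)) (b := t) (f := fun s => (q s)^2)
      ((hqdiff.continuous.pow 2).continuousOn)
    have hmem : α^2 ∈ uIcc ((q 0)^2) ((q t)^2) := by
      rw [hq0]
      rw [mem_uIcc]
      left
      constructor
      · nlinarith [sq_nonneg α]
      · exact hgt.le
    obtain ⟨s, _, hs⟩ := hsub hmem
    exact h3ne s hs
  have h5 : ∀ t, deriv q t ≠ 0 := by
    intro t h0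
    have hk2 := k2 t
    have hWpos : 0 < W (q t) :=
      Phi_pos hcont hφpos hc2 hd0 hr h3 (sub_ne_zero.2 (h3ne t))
    rw [h0, Phi_zero, mul_zero] at hk2
    linarith
  have h6 : ∃ T, 0 < deriv q T := by
    have hev : ∀ᶠ s in atTop, α/2 < q s := hqtop.eventually_const_lt (by linarith)
    obtain ⟨T0, hT0, hT1⟩ := ((eventually_ge_atTop (1:ℝ)).and hev).exists
    obtain ⟨ξ, _, hξ2⟩ := exists_hasDerivAt_eq_slope q (deriv q) (by linarith : (0:ℝ) < T0)
      (hqdiff.continuous.continuousOn) (fun x _ => hqd x)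
    refine ⟨ξ, ?_⟩
    rw [hξ2, hq0, sub_zero, sub_zero]
    apply div_pos (by linarith) (by linarith)
  have h7 : ∀ t, 0 < deriv q t := by
    intro t
    rcases lt_or_ge 0 (deriv q t) with h | h
    · exact h
    exfalso
    have hlt : deriv q t < 0 := lt_of_le_of_ne h (h5 t)
    obtain ⟨T, hT⟩ := h6
    have hsub := intermediate_value_uIcc (a := t) (b := T) (f := deriv q)
      (hq'cont.continuousOn)
    have hmem : (0:ℝ) ∈ uIcc (deriv q t) (deriv q T) := by
      rw [mem_uIcc]
      left
      exact ⟨hlt.le, hT.le⟩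
    obtain ⟨s, _, hs⟩ := hsub hmem
    exact h5 s hs
  have h8 : ∀ t, deriv q t ≤ α^2 - (q t)^2 := by
    intro t
    have := h2abs t
    rw [abs_of_pos (h7 t), abs_of_neg (by nlinarith [h4 t] : (q t)^2 - α^2 < 0)] at this
    linarith
  have h9 : ∀ t, (α^2 - (q t)^2)/(m-1) ≤ deriv q t := by
    intro t
    have hk2 := k2 t
    have hWe : W (q t) = Phi φ (α^2 - (q t)^2) := by
      show Phi φ ((q t)^2 - α^2) = _
      rw [show (q t)^2 - α^2 = -(α^2 - (q t)^2) by ring, Phi_neg]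
    set u := α^2 - (q t)^2 with hu
    have hupos : 0 < u := by nlinarith [h4 t]
    have hsc := Phi_scale hcont hφpos hc2 hd0 hr h3 hφ1 (lam := 1/(m-1))
      (div_pos one_pos hm0).le (by rw [div_le_one hm0]; linarith) u
    have hchain : Phi φ (u/(m-1)) ≤ Phi φ (deriv q t) := by
      have e1 : u/(m-1) = (1/(m-1)) * u := by ring
      rw [e1]
      refine le_trans hsc ?_
      rw [hWe] at hk2
      rw [div_mul_eq_mul_div, one_mul, div_le_iff₀ hm0]
      linarith [hk2]
    by_contra hno
    push_neg at hno
    have : Phi φ (deriv q t) < Phi φ (u/(m-1)) :=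
      hPhiSM (mem_Ici.2 (h7 t).le) (mem_Ici.2 (div_nonneg hupos.le hm0.le)) hno
    linarith
  -- tanh facts
  have htanhdiff : Differentiable ℝ Real.tanh := fun x => (tanh_hasDerivAt x).differentiableAt
  have htanhc : Continuous Real.tanh := htanhdiff.continuous
  have hT : ∀ x : ℝ, HasDerivAt (fun s : ℝ => α * Real.tanh (α * s))
      (α^2 - (α * Real.tanh (α * x))^2) x := by
    intro x
    have h1 : HasDerivAt (fun s : ℝ => α * s) α x := by
      simpa using (hasDerivAt_id x).const_mul α
    have h2 := ((tanh_hasDerivAt (α*x)).comp x h1).const_mul α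
    refine h2.congr_deriv ?_
    ring
  have hP : ∀ x : ℝ, HasDerivAt (fun s : ℝ => α * Real.tanh (α * s / (m-1)))
      ((α^2 - (α * Real.tanh (α * x / (m-1)))^2)/(m-1)) x := by
    intro x
    have h1 : HasDerivAt (fun s : ℝ => α * s / (m-1)) (α/(m-1)) x := by
      simpa using ((hasDerivAt_id x).const_mul α).div_const (m-1)
    have h2 := ((tanh_hasDerivAt (α*x/(m-1))).comp x h1).const_mul α
    refine h2.congr_deriv ?_
    field_simp
  -- upper bound
  have hzcont : Continuous fun t : ℝ => α * Real.tanh (α * t) := by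
    apply continuous_const.mul
    exact htanhc.comp (continuous_const.mul continuous_id)
  have hPcont : Continuous fun t : ℝ => α * Real.tanh (α * t / (m-1)) := by
    apply continuous_const.mul
    exact htanhc.comp ((continuous_const.mul continuous_id).div_const (m-1))
  have hupper : ∀ t, 0 ≤ t → q t ≤ α * Real.tanh (α * t) := by
    have hres := nonpos_of_deriv_le
      (f := fun t => q t - α * Real.tanh (α * t))
      (f' := fun t => deriv q t - (α^2 - (α * Real.tanh (α * t))^2))
      (c := fun t => q t + α * Real.tanh (α * t))
      (hqdiff.continuous.add hzcont)
      (fun t => (hqd t).sub (hT t))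
      (fun t => by
        show deriv q t - (α^2 - (α * Real.tanh (α * t))^2) ≤
          -((q t + α * Real.tanh (α * t)) * (q t - α * Real.tanh (α * t)))
        have := h8 t
        nlinarith)
      (by simp [hq0, Real.tanh_zero])
    intro t ht
    have h10 : q t - α * Real.tanh (α * t) ≤ 0 := hres t ht
    linarith
  have hlower : ∀ t, 0 ≤ t → α * Real.tanh (α * t / (m-1)) ≤ q t := by
    have hres := nonpos_of_deriv_le
      (f := fun t => α * Real.tanh (α * t / (m-1)) - q t)
      (f' := fun t => (α^2 - (α * Real.tanh (α * t / (m-1)))^2)/(m-1) - deriv q t)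
      (c := fun t => (α * Real.tanh (α * t / (m-1)) + q t)/(m-1))
      ((hPcont.add hqdiff.continuous).div_const (m-1))
      (fun t => (hP t).sub (hqd t))
      (fun t => by
        show (α^2 - (α * Real.tanh (α * t / (m-1)))^2)/(m-1) - deriv q t ≤
          -((α * Real.tanh (α * t / (m-1)) + q t)/(m-1) *
            (α * Real.tanh (α * t / (m-1)) - q t))
        have h9t := h9 t
        have e1 : -((α * Real.tanh (α * t / (m-1)) + q t)/(m-1) *
            (α * Real.tanh (α * t / (m-1)) - q t))
            = ((q t)^2 - (α * Real.tanh (α * t / (m-1)))^2)/(m-1) := by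
          field_simp
          ring
        rw [e1]
        have e2 : (α^2 - (α * Real.tanh (α * t / (m-1)))^2)/(m-1)
            - ((q t)^2 - (α * Real.tanh (α * t / (m-1)))^2)/(m-1)
            = (α^2 - (q t)^2)/(m-1) := by ring
        linarith)
      (by simp [hq0, Real.tanh_zero])
    intro t ht
    have h10 : α * Real.tanh (α * t / (m-1)) - q t ≤ 0 := hres t ht
    linarith
  exact fun t ht => ⟨hlower t ht, hupper t ht⟩
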